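/- arXiv:2208.04421 — 4 statements merged into one kernel-verified Lean document; each statement's English description precedes it below -/
import Mathlib

section
/- Let Ω ⊂ ℝ^d be a bounded open set, let u ∈ L²(Ω;ℝ^d) be weakly incompressible with no-penetration, let f ∈ L²(Ω), and let T be a steady weak solution of the advection–diffusion equation with velocity u and source f. Let η: ℝ^d → ℝ be continuously differentiable and let v be a weak Neumann solution of Δv = u·∇η − f on Ω. Then ∫_Ω |∇T|² dx ≤ ∫_Ω |∇η|² dx + ∫_Ω |∇v|² dx. -/
open MeasureTheory

local notation "⟪" x ", " y "⟫" => @inner ℝ _ _ x y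

lemma inner_grad_eq' {d : ℕ} (g : EuclideanSpace ℝ (Fin d) → ℝ)
    (x y : EuclideanSpace ℝ (Fin d)) :
    ⟪y, gradient g x⟫ = fderiv ℝ g x y := by
  rw [real_inner_comm, gradient]
  exact InnerProductSpace.toDual_symm_apply

lemma grad_continuous' {d : ℕ} {g : EuclideanSpace ℝ (Fin d) → ℝ} (hg : ContDiff ℝ 1 g) :
    Continuous (gradient g) := by
  show Continuous fun x => (InnerProductSpace.toDual ℝ _).symm (fderiv ℝ g x)
  exact ((InnerProductSpace.toDual ℝ _).symm.continuous).comp (hg.continuous_fderiv one_ne_zero)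

/-- variational upper bound on the thermal dissipation of a steady weak
solution of the advection–diffusion equation, with test function `η` and `v` the weak
Neumann solution of `Δv = u·∇η − f`. -/
theorem dissipation_upper_bound {d : ℕ}
    (Ω : Set (EuclideanSpace ℝ (Fin d)))
    (hΩo : IsOpen Ω) (hΩb : Bornology.IsBounded Ω) (hΩpos : 0 < volume Ω)
    (u : EuclideanSpace ℝ (Fin d) → EuclideanSpace ℝ (Fin d))
    (hu : MemLp u 2 (volume.restrict Ω))
    (hdiv : ∀ ψ : EuclideanSpace ℝ (Fin d) → ℝ, ContDiff ℝ 1 ψ →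
      ∫ x in Ω, (inner ℝ (u x) (gradient ψ x) : ℝ) = 0)
    (f : EuclideanSpace ℝ (Fin d) → ℝ)
    (hf : MemLp f 2 (volume.restrict Ω))
    (T : EuclideanSpace ℝ (Fin d) → ℝ) (hT : ContDiff ℝ 1 T)
    (hTweak : ∀ φ : EuclideanSpace ℝ (Fin d) → ℝ, ContDiff ℝ 1 φ →
      ∫ x in Ω, (inner ℝ (gradient T x) (gradient φ x) : ℝ)
        = ∫ x in Ω, (f x - (inner ℝ (u x) (gradient T x) : ℝ)) * φ x)
    (η : EuclideanSpace ℝ (Fin d) → ℝ) (hη : ContDiff ℝ 1 η)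
    (v : EuclideanSpace ℝ (Fin d) → ℝ) (hv : ContDiff ℝ 1 v)
    (hvweak : ∀ φ : EuclideanSpace ℝ (Fin d) → ℝ, ContDiff ℝ 1 φ →
      ∫ x in Ω, (inner ℝ (gradient v x) (gradient φ x) : ℝ)
        = - ∫ x in Ω, ((inner ℝ (u x) (gradient η x) : ℝ) - f x) * φ x) :
    ∫ x in Ω, ‖gradient T x‖ ^ 2
      ≤ (∫ x in Ω, ‖gradient η x‖ ^ 2) + ∫ x in Ω, ‖gradient v x‖ ^ 2 := by
  have hΩm : MeasurableSet Ω := hΩo.measurableSet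
  have hK : IsCompact (closure Ω) := hΩb.isCompact_closure
  haveI : IsFiniteMeasure (volume.restrict Ω) :=
    ⟨by simpa [Measure.restrict_apply, Set.univ_inter] using hΩb.measure_lt_top⟩
  set μ := volume.restrict Ω with hμdef
  -- continuity facts
  have cT : Continuous T := hT.continuous
  have cη : Continuous η := hη.continuous
  have cv : Continuous v := hv.continuous
  have cgT := grad_continuous' hT
  have cgη := grad_continuous' hη
  have cgv := grad_continuous' hv
  -- integrability helpers
  have hIcont : ∀ g : EuclideanSpace ℝ (Fin d) → ℝ, Continuous g → Integrable g μ := by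
    intro g hg
    exact (hg.continuousOn.integrableOn_compact hK).mono_set subset_closure
  have hintu : ∀ w : EuclideanSpace ℝ (Fin d) → EuclideanSpace ℝ (Fin d), Continuous w →
      Integrable (fun x => ⟪u x, w x⟫) μ := by
    intro w hw
    obtain ⟨C, hC⟩ := hK.exists_bound_of_continuousOn hw.continuousOn
    refine ((((hu.integrable one_le_two).norm.const_mul C)).mono'
      (hu.aestronglyMeasurable.inner hw.aestronglyMeasurable) ?_)
    filter_upwards [ae_restrict_mem hΩm] with x hx
    calc ‖(⟪u x, w x⟫ : ℝ)‖ ≤ ‖u x‖ * ‖w x‖ := norm_inner_le_norm _ _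
      _ ≤ ‖u x‖ * C := by
          exact mul_le_mul_of_nonneg_left (hC x (subset_closure hx)) (norm_nonneg _)
      _ = C * ‖u x‖ := mul_comm _ _
  have hintu' : ∀ (p : EuclideanSpace ℝ (Fin d) → ℝ)
      (w : EuclideanSpace ℝ (Fin d) → EuclideanSpace ℝ (Fin d)), Continuous p → Continuous w →
      Integrable (fun x => p x * ⟪u x, w x⟫) μ := by
    intro p w hp hw
    exact (hintu (fun x => p x • w x) (hp.smul hw)).congr
      (Filter.Eventually.of_forall fun x => real_inner_smul_right _ _ _)
  have hintf : ∀ g : EuclideanSpace ℝ (Fin d) → ℝ, Continuous g →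
      Integrable (fun x => f x * g x) μ := by
    intro g hg
    obtain ⟨C, hC⟩ := hK.exists_bound_of_continuousOn hg.continuousOn
    refine ((((hf.integrable one_le_two).norm.const_mul C)).mono'
      (hf.aestronglyMeasurable.mul hg.aestronglyMeasurable) ?_)
    filter_upwards [ae_restrict_mem hΩm] with x hx
    calc ‖f x * g x‖ = ‖f x‖ * ‖g x‖ := norm_mul _ _
      _ ≤ ‖f x‖ * C := mul_le_mul_of_nonneg_left (hC x (subset_closure hx)) (norm_nonneg _)
      _ = C * ‖f x‖ := mul_comm _ _
  -- product rule for u · ∇(pq)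
  have hprod : ∀ (p q : EuclideanSpace ℝ (Fin d) → ℝ), ContDiff ℝ 1 p → ContDiff ℝ 1 q →
      ∀ x, ⟪u x, gradient (fun y => p y * q y) x⟫
        = p x * ⟪u x, gradient q x⟫ + q x * ⟪u x, gradient p x⟫ := by
    intro p q hp hq x
    rw [inner_grad_eq', inner_grad_eq', inner_grad_eq',
      fderiv_fun_mul (hp.differentiable one_ne_zero x) (hq.differentiable one_ne_zero x)]
    simp [smul_eq_mul]
  -- incompressibility consequences
  have hTa : ∫ x in Ω, T x * ⟪u x, gradient T x⟫ = 0 := by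
    have h0 := hdiv (fun y => T y * T y) (hT.mul hT)
    have h1 : ∫ x in Ω, 2 * (T x * ⟪u x, gradient T x⟫) = 0 := by
      rw [← h0]
      refine integral_congr_ae (Filter.Eventually.of_forall fun x => ?_)
      beta_reduce; rw [hprod T T hT hT x]; ring
    rw [integral_const_mul] at h1
    linarith
  have hηb : ∫ x in Ω, η x * ⟪u x, gradient η x⟫ = 0 := by
    have h0 := hdiv (fun y => η y * η y) (hη.mul hη)
    have h1 : ∫ x in Ω, 2 * (η x * ⟪u x, gradient η x⟫) = 0 := by
      rw [← h0]
      refine integral_congr_ae (Filter.Eventually.of_forall fun x => ?_)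
      beta_reduce; rw [hprod η η hη hη x]; ring
    rw [integral_const_mul] at h1
    linarith
  have hTb : (∫ x in Ω, T x * ⟪u x, gradient η x⟫)
      = - ∫ x in Ω, η x * ⟪u x, gradient T x⟫ := by
    have h0 := hdiv (fun y => T y * η y) (hT.mul hη)
    have h1 : ∫ x in Ω, (T x * ⟪u x, gradient η x⟫ + η x * ⟪u x, gradient T x⟫) = 0 := by
      rw [← h0]
      exact integral_congr_ae (Filter.Eventually.of_forall fun x => by beta_reduce; exact (hprod T η hT hη x).symm)
    rw [integral_add (hintu' T _ cT cgη) (hintu' η _ cη cgT)] at h1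
    linarith
  -- weak formulation consequences
  have h1 : (∫ x in Ω, ⟪gradient T x, gradient T x⟫) = ∫ x in Ω, f x * T x := by
    have h := hTweak T hT
    have hsplit : (∫ x in Ω, (f x - ⟪u x, gradient T x⟫) * T x)
        = (∫ x in Ω, f x * T x) - ∫ x in Ω, T x * ⟪u x, gradient T x⟫ := by
      rw [← integral_sub (hintf T cT) (hintu' T _ cT cgT)]
      exact integral_congr_ae (Filter.Eventually.of_forall fun x => by beta_reduce; ring)
    rw [h, hsplit, hTa, sub_zero]
  have h2 : (∫ x in Ω, ⟪gradient T x, gradient η x⟫)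
      = (∫ x in Ω, f x * η x) - ∫ x in Ω, η x * ⟪u x, gradient T x⟫ := by
    have h := hTweak η hη
    rw [h, ← integral_sub (hintf η cη) (hintu' η _ cη cgT)]
    exact integral_congr_ae (Filter.Eventually.of_forall fun x => by beta_reduce; ring)
  have h3 : (∫ x in Ω, ⟪gradient v x, gradient T x⟫)
      = (∫ x in Ω, f x * T x) + ∫ x in Ω, η x * ⟪u x, gradient T x⟫ := by
    have h := hvweak T hT
    have hsplit : (∫ x in Ω, (⟪u x, gradient η x⟫ - f x) * T x)
        = (∫ x in Ω, T x * ⟪u x, gradient η x⟫) - ∫ x in Ω, f x * T x := by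
      rw [← integral_sub (hintu' T _ cT cgη) (hintf T cT)]
      exact integral_congr_ae (Filter.Eventually.of_forall fun x => by beta_reduce; ring)
    rw [h, hsplit, hTb]
    ring
  have h4 : (∫ x in Ω, ⟪gradient v x, gradient η x⟫) = ∫ x in Ω, f x * η x := by
    have h := hvweak η hη
    have hsplit : (∫ x in Ω, (⟪u x, gradient η x⟫ - f x) * η x)
        = (∫ x in Ω, η x * ⟪u x, gradient η x⟫) - ∫ x in Ω, f x * η x := by
      rw [← integral_sub (hintu' η _ cη cgη) (hintf η cη)]
      exact integral_congr_ae (Filter.Eventually.of_forall fun x => by beta_reduce; ring)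
    rw [h, hsplit, hηb]
    ring
  -- key identity
  have key : (∫ x in Ω, ⟪gradient T x, gradient η x⟫) + (∫ x in Ω, ⟪gradient v x, gradient T x⟫)
      = (∫ x in Ω, ⟪gradient T x, gradient T x⟫) + ∫ x in Ω, ⟪gradient v x, gradient η x⟫ := by
    rw [h1, h2, h3, h4]; ring
  -- nonnegativity of the completed square
  have hpos : (0:ℝ) ≤ ∫ x in Ω, ‖gradient η x + gradient v x - gradient T x‖ ^ 2 :=
    integral_nonneg fun x => sq_nonneg _
  -- expand the square
  have iη : Integrable (fun x => ‖gradient η x‖ ^ 2) μ := hIcont _ (cgη.norm.pow 2)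
  have iv : Integrable (fun x => ‖gradient v x‖ ^ 2) μ := hIcont _ (cgv.norm.pow 2)
  have iT : Integrable (fun x => ‖gradient T x‖ ^ 2) μ := hIcont _ (cgT.norm.pow 2)
  have iηv : Integrable (fun x => (2:ℝ) * ⟪gradient η x, gradient v x⟫) μ :=
    (hIcont _ (cgη.inner cgv)).const_mul 2
  have iTη : Integrable (fun x => (2:ℝ) * ⟪gradient T x, gradient η x⟫) μ :=
    (hIcont _ (cgT.inner cgη)).const_mul 2
  have ivT : Integrable (fun x => (2:ℝ) * ⟪gradient v x, gradient T x⟫) μ :=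
    (hIcont _ (cgv.inner cgT)).const_mul 2
  have expand : (∫ x in Ω, ‖gradient η x + gradient v x - gradient T x‖ ^ 2)
      = (∫ x in Ω, ‖gradient η x‖ ^ 2) + (∫ x in Ω, ‖gradient v x‖ ^ 2)
        + (∫ x in Ω, ‖gradient T x‖ ^ 2)
        + 2 * (∫ x in Ω, ⟪gradient η x, gradient v x⟫)
        - 2 * (∫ x in Ω, ⟪gradient T x, gradient η x⟫)
        - 2 * (∫ x in Ω, ⟪gradient v x, gradient T x⟫) := by
    have hpt : ∀ x : EuclideanSpace ℝ (Fin d),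
        ‖gradient η x + gradient v x - gradient T x‖ ^ 2
        = ‖gradient η x‖ ^ 2 + ‖gradient v x‖ ^ 2 + ‖gradient T x‖ ^ 2
          + 2 * ⟪gradient η x, gradient v x⟫ - 2 * ⟪gradient T x, gradient η x⟫
          - 2 * ⟪gradient v x, gradient T x⟫ := by
      intro x
      rw [← real_inner_self_eq_norm_sq, ← real_inner_self_eq_norm_sq,
        ← real_inner_self_eq_norm_sq, ← real_inner_self_eq_norm_sq]
      simp only [inner_sub_left, inner_sub_right, inner_add_left, inner_add_right]
      simp only [real_inner_comm (gradient η x) (gradient v x),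
        real_inner_comm (gradient η x) (gradient T x),
        real_inner_comm (gradient v x) (gradient T x)]
      ring
    have iA1 : Integrable (fun x => ‖gradient η x‖ ^ 2 + ‖gradient v x‖ ^ 2) μ := iη.add iv
    have iA2 : Integrable (fun x => ‖gradient η x‖ ^ 2 + ‖gradient v x‖ ^ 2
        + ‖gradient T x‖ ^ 2) μ := iA1.add iT
    have iA3 : Integrable (fun x => ‖gradient η x‖ ^ 2 + ‖gradient v x‖ ^ 2
        + ‖gradient T x‖ ^ 2 + 2 * ⟪gradient η x, gradient v x⟫) μ := iA2.add iηv
    have iA4 : Integrable (fun x => ‖gradient η x‖ ^ 2 + ‖gradient v x‖ ^ 2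
        + ‖gradient T x‖ ^ 2 + 2 * ⟪gradient η x, gradient v x⟫
        - 2 * ⟪gradient T x, gradient η x⟫) μ := iA3.sub iTη
    rw [integral_congr_ae (Filter.Eventually.of_forall hpt)]
    rw [integral_sub iA4 ivT, integral_sub iA3 iTη, integral_add iA2 iηv,
      integral_add iA1 iT, integral_add iη iv, integral_const_mul, integral_const_mul,
      integral_const_mul]
  -- relate inner自 to norms
  have hTn : (∫ x in Ω, ⟪gradient T x, gradient T x⟫) = ∫ x in Ω, ‖gradient T x‖ ^ 2 :=
    integral_congr_ae (Filter.Eventually.of_forall fun x => real_inner_self_eq_norm_sq _)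
  have hcomm : (∫ x in Ω, ⟪gradient η x, gradient v x⟫)
      = ∫ x in Ω, ⟪gradient v x, gradient η x⟫ :=
    integral_congr_ae (Filter.Eventually.of_forall fun x => real_inner_comm _ _)
  rw [hTn] at key
  linarith [hpos, key, expand, hcomm]
end

section
/- Let Ω ⊂ ℝ^d be a bounded open set, let u ∈ L²(Ω;ℝ^d) be weakly incompressible with no-penetration, let f ∈ L²(Ω), and let T be a steady weak solution of the advection–diffusion equation with velocity u and source f. Let ξ: ℝ^d → ℝ be continuously differentiable with |ξ(x)| ≤ K for all x ∈ Ω, let w be a weak Neumann solution of Δw = u·∇ξ on Ω, and assume ∫_Ω |∇ξ|² dx + K² ∫_Ω |u|² dx > 0. Then ∫_Ω |∇T|² dx ≥ (∫_Ω f ξ dx)² / (∫_Ω |∇ξ|² dx + K² ∫_Ω |u|² dx). -/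
open MeasureTheory

section Aux

variable {α : Type*} [MeasurableSpace α] {μ : Measure α}
variable {E : Type*} [NormedAddCommGroup E] [InnerProductSpace ℝ E]

local notation "⟪" x ", " y "⟫" => @inner ℝ _ _ x y

lemma integrable_inner_of_memL2 {F G : α → E} (hF : MemLp F 2 μ) (hG : MemLp G 2 μ) :
    Integrable (fun x => ⟪F x, G x⟫) μ := by
  have h := L2.integrable_inner (𝕜 := ℝ) (hF.toLp F) (hG.toLp G)
  refine h.congr ?_
  filter_upwards [hF.coeFn_toLp, hG.coeFn_toLp] with x hx hy
  rw [hx, hy]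

lemma integrable_mul_of_memL2 {F G : α → ℝ} (hF : MemLp F 2 μ) (hG : MemLp G 2 μ) :
    Integrable (fun x => F x * G x) μ := by
  have := integrable_inner_of_memL2 (E := ℝ) hF hG
  simpa [RCLike.inner_apply, mul_comm] using this

lemma cauchy_schwarz_integral {F G : α → E} (hF : MemLp F 2 μ) (hG : MemLp G 2 μ) :
    (∫ x, ⟪F x, G x⟫ ∂μ) ^ 2 ≤ (∫ x, ‖F x‖ ^ 2 ∂μ) * (∫ x, ‖G x‖ ^ 2 ∂μ) := by
  have hpq : Real.HolderConjugate 2 2 := Real.holderConjugate_iff.mpr ⟨one_lt_two, by norm_num⟩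
  have h2 : (ENNReal.ofReal (2:ℝ)) = 2 := by norm_num
  have hH : ∫ x, ‖F x‖ * ‖G x‖ ∂μ
      ≤ (∫ x, ‖F x‖ ^ (2:ℝ) ∂μ) ^ (1/2:ℝ) * (∫ x, ‖G x‖ ^ (2:ℝ) ∂μ) ^ (1/2:ℝ) :=
    integral_mul_norm_le_Lp_mul_Lq hpq (h2 ▸ hF) (h2 ▸ hG)
  have habs : |∫ x, ⟪F x, G x⟫ ∂μ| ≤ ∫ x, ‖F x‖ * ‖G x‖ ∂μ := by
    calc |∫ x, ⟪F x, G x⟫ ∂μ| ≤ ∫ x, |⟪F x, G x⟫| ∂μ := by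
          simpa [Real.norm_eq_abs] using
            norm_integral_le_integral_norm (μ := μ) (f := fun x => ⟪F x, G x⟫)
      _ ≤ ∫ x, ‖F x‖ * ‖G x‖ ∂μ := by
          refine integral_mono ((integrable_inner_of_memL2 hF hG).abs) ?_ ?_
          · exact integrable_mul_of_memL2 hF.norm hG.norm
          · intro x
            simpa [Real.norm_eq_abs] using norm_inner_le_norm (𝕜 := ℝ) (F x) (G x)
  have hr : ∀ {H : α → E}, ∫ x, ‖H x‖ ^ (2:ℝ) ∂μ = ∫ x, ‖H x‖ ^ 2 ∂μ := by
    intro H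
    refine integral_congr_ae (Filter.Eventually.of_forall fun x => ?_)
    have := Real.rpow_natCast (‖H x‖) 2
    norm_num at this
    simp [this]
  have hFnn : (0:ℝ) ≤ ∫ x, ‖F x‖ ^ 2 ∂μ := integral_nonneg fun x => by positivity
  have hGnn : (0:ℝ) ≤ ∫ x, ‖G x‖ ^ 2 ∂μ := integral_nonneg fun x => by positivity
  have hmulnn : (0:ℝ) ≤ ∫ x, ‖F x‖ * ‖G x‖ ∂μ :=
    integral_nonneg fun x => mul_nonneg (norm_nonneg _) (norm_nonneg _)
  calc (∫ x, ⟪F x, G x⟫ ∂μ) ^ 2 = |∫ x, ⟪F x, G x⟫ ∂μ| ^ 2 := (sq_abs _).symm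
    _ ≤ (∫ x, ‖F x‖ * ‖G x‖ ∂μ) ^ 2 := by
        exact pow_le_pow_left₀ (abs_nonneg _) habs 2
    _ ≤ ((∫ x, ‖F x‖ ^ (2:ℝ) ∂μ) ^ (1/2:ℝ) * (∫ x, ‖G x‖ ^ (2:ℝ) ∂μ) ^ (1/2:ℝ)) ^ 2 :=
        pow_le_pow_left₀ hmulnn hH 2
    _ = (∫ x, ‖F x‖ ^ 2 ∂μ) * (∫ x, ‖G x‖ ^ 2 ∂μ) := by
        rw [mul_pow, hr, hr]
        rw [← Real.rpow_natCast ((∫ x, ‖F x‖ ^ 2 ∂μ) ^ (1/2:ℝ)) 2,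
          ← Real.rpow_natCast ((∫ x, ‖G x‖ ^ 2 ∂μ) ^ (1/2:ℝ)) 2,
          ← Real.rpow_mul hFnn, ← Real.rpow_mul hGnn]
        norm_num

end Aux

section Grad

variable {E : Type*} [NormedAddCommGroup E] [InnerProductSpace ℝ E] [CompleteSpace E]

lemma gradient_continuous_of_contDiff {g : E → ℝ} (hg : ContDiff ℝ 1 g) :
    Continuous (gradient g) := by
  have h : Continuous (fderiv ℝ g) := hg.continuous_fderiv one_ne_zero
  exact (InnerProductSpace.toDual ℝ E).symm.continuous.comp h

lemma gradient_sq (g : E → ℝ) (hg : ContDiff ℝ 1 g) (x : E) :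
    gradient (fun y => g y * g y) x = (2 * g x) • gradient g x := by
  have hd : DifferentiableAt ℝ g x := (hg.differentiable one_ne_zero) x
  have hf : fderiv ℝ (fun y => g y * g y) x = (2 * g x) • fderiv ℝ g x := by
    rw [fderiv_fun_mul hd hd, ← add_smul]
    ring_nf
  show (InnerProductSpace.toDual ℝ E).symm (fderiv ℝ (fun y => g y * g y) x) = _
  rw [hf, LinearIsometryEquiv.map_smul]
  rfl

end Grad

/-- quantitative lower bound on the thermal dissipation in terms of a
bounded test function `ξ` and the kinetic energy of the flow:
`∫|∇T|² ≥ (∫ fξ)² / (∫|∇ξ|² + K² ∫|u|²)`. -/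
theorem dissipation_lower_bound_energy {d : ℕ}
    (Ω : Set (EuclideanSpace ℝ (Fin d)))
    (hΩo : IsOpen Ω) (hΩb : Bornology.IsBounded Ω) (hΩpos : 0 < volume Ω)
    (u : EuclideanSpace ℝ (Fin d) → EuclideanSpace ℝ (Fin d))
    (hu : MemLp u 2 (volume.restrict Ω))
    (hdiv : ∀ ψ : EuclideanSpace ℝ (Fin d) → ℝ, ContDiff ℝ 1 ψ →
      ∫ x in Ω, (inner ℝ (u x) (gradient ψ x) : ℝ) = 0)
    (f : EuclideanSpace ℝ (Fin d) → ℝ)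
    (hf : MemLp f 2 (volume.restrict Ω))
    (T : EuclideanSpace ℝ (Fin d) → ℝ) (hT : ContDiff ℝ 1 T)
    (hTweak : ∀ φ : EuclideanSpace ℝ (Fin d) → ℝ, ContDiff ℝ 1 φ →
      ∫ x in Ω, (inner ℝ (gradient T x) (gradient φ x) : ℝ)
        = ∫ x in Ω, (f x - (inner ℝ (u x) (gradient T x) : ℝ)) * φ x)
    (ξ : EuclideanSpace ℝ (Fin d) → ℝ) (hξ : ContDiff ℝ 1 ξ)
    (K : ℝ) (hK : ∀ x ∈ Ω, |ξ x| ≤ K)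
    (w : EuclideanSpace ℝ (Fin d) → ℝ) (hw : ContDiff ℝ 1 w)
    (hwweak : ∀ φ : EuclideanSpace ℝ (Fin d) → ℝ, ContDiff ℝ 1 φ →
      ∫ x in Ω, (inner ℝ (gradient w x) (gradient φ x) : ℝ)
        = - ∫ x in Ω, (inner ℝ (u x) (gradient ξ x) : ℝ) * φ x)
    (hpos : 0 < (∫ x in Ω, ‖gradient ξ x‖ ^ 2) + K ^ 2 * ∫ x in Ω, ‖u x‖ ^ 2) :
    ∫ x in Ω, ‖gradient T x‖ ^ 2
      ≥ (∫ x in Ω, f x * ξ x) ^ 2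
        / ((∫ x in Ω, ‖gradient ξ x‖ ^ 2) + K ^ 2 * ∫ x in Ω, ‖u x‖ ^ 2) := by
  classical
  set μ := volume.restrict Ω with hμdef
  -- finite measure
  have hfin : volume Ω < ⊤ := hΩb.measure_lt_top
  have hfinμ : IsFiniteMeasure μ := ⟨by simpa [hμdef, Measure.restrict_apply_univ] using hfin⟩
  -- membership in L² of continuous functions
  have memL2_of_cont : ∀ {F : Type} [NormedAddCommGroup F] [NormedSpace ℝ F]
      (g : EuclideanSpace ℝ (Fin d) → F), Continuous g → MemLp g 2 μ := by
    intro F _ _ g hg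
    obtain ⟨C, hC⟩ := hΩb.isCompact_closure.exists_bound_of_continuousOn hg.continuousOn
    have hb : ∀ᵐ x ∂μ, ‖g x‖ ≤ C := by
      filter_upwards [ae_restrict_mem hΩo.measurableSet] with x hx
      exact hC x (subset_closure hx)
    exact (memLp_top_of_bound hg.aestronglyMeasurable C hb).mono_exponent le_top
  have hgT : MemLp (fun x => gradient T x) 2 μ :=
    memL2_of_cont _ (gradient_continuous_of_contDiff hT)
  have hgξ : MemLp (fun x => gradient ξ x) 2 μ :=
    memL2_of_cont _ (gradient_continuous_of_contDiff hξ)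
  have hξL2 : MemLp ξ 2 μ := memL2_of_cont _ hξ.continuous
  -- ξ • u in L²
  have hξbd : ∀ᵐ x ∂μ, |ξ x| ≤ K := by
    filter_upwards [ae_restrict_mem hΩo.measurableSet] with x hx using hK x hx
  have hξu : MemLp (fun x => ξ x • u x) 2 μ := by
    refine MemLp.of_le_mul (c := K) hu (hξ.continuous.aestronglyMeasurable.smul hu.1) ?_
    filter_upwards [hξbd] with x hx
    rw [norm_smul, Real.norm_eq_abs]
    exact mul_le_mul_of_nonneg_right hx (norm_nonneg _)
  set v : EuclideanSpace ℝ (Fin d) → EuclideanSpace ℝ (Fin d) :=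
    fun x => gradient ξ x + ξ x • u x with hvdef
  have hv : MemLp v 2 μ := hgξ.add hξu
  -- integrability facts
  have I1 : Integrable (fun x => (inner ℝ (gradient T x) (gradient ξ x) : ℝ)) μ :=
    integrable_inner_of_memL2 hgT hgξ
  have I2 : Integrable (fun x => (inner ℝ (gradient T x) (ξ x • u x) : ℝ)) μ :=
    integrable_inner_of_memL2 hgT hξu
  have IuT : Integrable (fun x => (inner ℝ (u x) (gradient T x) : ℝ)) μ :=
    integrable_inner_of_memL2 hu hgT
  have If : Integrable (fun x => f x * ξ x) μ := integrable_mul_of_memL2 hf hξL2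
  have I3 : Integrable (fun x => (inner ℝ (u x) (gradient T x) : ℝ) * ξ x) μ := by
    have := IuT.bdd_mul (c := K) (hξ.continuous.aestronglyMeasurable)
      (by filter_upwards [hξbd] with x hx using by simpa [Real.norm_eq_abs] using hx)
    simpa [mul_comm] using this
  -- step 1 : ∫ f ξ = ∫ ⟪∇T, v⟫
  have hweak := hTweak ξ hξ
  have hsplit : ∫ x, (f x - (inner ℝ (u x) (gradient T x) : ℝ)) * ξ x ∂μ
      = ∫ x, f x * ξ x ∂μ - ∫ x, (inner ℝ (u x) (gradient T x) : ℝ) * ξ x ∂μ := by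
    rw [← integral_sub If I3]
    congr 1
    ext x
    ring
  have hS : ∫ x, (inner ℝ (gradient T x) (v x) : ℝ) ∂μ = ∫ x, f x * ξ x ∂μ := by
    have hpt : ∀ x, (inner ℝ (gradient T x) (v x) : ℝ)
        = (inner ℝ (gradient T x) (gradient ξ x) : ℝ)
          + (inner ℝ (u x) (gradient T x) : ℝ) * ξ x := by
      intro x
      rw [hvdef]
      simp only [inner_add_right, real_inner_smul_right]
      rw [real_inner_comm (gradient T x) (u x)]
      ring
    calc ∫ x, (inner ℝ (gradient T x) (v x) : ℝ) ∂μ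
        = ∫ x, ((inner ℝ (gradient T x) (gradient ξ x) : ℝ)
            + (inner ℝ (u x) (gradient T x) : ℝ) * ξ x) ∂μ := by
          exact integral_congr_ae (Filter.Eventually.of_forall hpt)
      _ = (∫ x, (inner ℝ (gradient T x) (gradient ξ x) : ℝ) ∂μ)
            + ∫ x, (inner ℝ (u x) (gradient T x) : ℝ) * ξ x ∂μ := integral_add I1 I3
      _ = ∫ x, f x * ξ x ∂μ := by
          rw [hweak, hsplit]; ring
  -- step 2 : cross term vanishes
  have hcross : ∫ x, ξ x * (inner ℝ (u x) (gradient ξ x) : ℝ) ∂μ = 0 := by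
    have hψ := hdiv (fun y => ξ y * ξ y) (hξ.mul hξ)
    have hpt : ∀ x, (inner ℝ (u x) (gradient (fun y => ξ y * ξ y) x) : ℝ)
        = 2 * (ξ x * (inner ℝ (u x) (gradient ξ x) : ℝ)) := by
      intro x
      rw [gradient_sq ξ hξ x, real_inner_smul_right]
      ring
    have h2 : ∫ x, 2 * (ξ x * (inner ℝ (u x) (gradient ξ x) : ℝ)) ∂μ = 0 := by
      rw [← integral_congr_ae (Filter.Eventually.of_forall hpt)]
      exact hψ
    rw [integral_const_mul] at h2
    linarith
  -- integrability for the expansion of ‖v‖²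
  have Igξ2 : Integrable (fun x => ‖gradient ξ x‖ ^ 2) μ := by
    have := integrable_inner_of_memL2 hgξ hgξ
    refine this.congr (Filter.Eventually.of_forall fun x => ?_)
    simp only [real_inner_self_eq_norm_sq]
  have Iu2 : Integrable (fun x => ‖u x‖ ^ 2) μ := by
    have := integrable_inner_of_memL2 hu hu
    refine this.congr (Filter.Eventually.of_forall fun x => ?_)
    simp only [real_inner_self_eq_norm_sq]
  have Iξu2 : Integrable (fun x => (ξ x) ^ 2 * ‖u x‖ ^ 2) μ := by
    have := integrable_inner_of_memL2 hξu hξu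
    refine this.congr (Filter.Eventually.of_forall fun x => ?_)
    simp only [real_inner_self_eq_norm_sq, norm_smul, Real.norm_eq_abs, mul_pow, sq_abs]
  have Icross : Integrable (fun x => 2 * (ξ x * (inner ℝ (u x) (gradient ξ x) : ℝ))) μ := by
    have h0 : Integrable (fun x => (inner ℝ (u x) (gradient ξ x) : ℝ)) μ :=
      integrable_inner_of_memL2 hu hgξ
    have h1 := h0.bdd_mul (c := K) (hξ.continuous.aestronglyMeasurable)
      (by filter_upwards [hξbd] with x hx using by simpa [Real.norm_eq_abs] using hx)
    exact h1.const_mul 2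
  -- step 3 : expansion of ∫ ‖v‖²
  have hB : ∫ x, ‖v x‖ ^ 2 ∂μ
      = (∫ x, ‖gradient ξ x‖ ^ 2 ∂μ) + ∫ x, (ξ x) ^ 2 * ‖u x‖ ^ 2 ∂μ := by
    have hpt : ∀ x, ‖v x‖ ^ 2
        = ‖gradient ξ x‖ ^ 2 + 2 * (ξ x * (inner ℝ (u x) (gradient ξ x) : ℝ))
          + (ξ x) ^ 2 * ‖u x‖ ^ 2 := by
      intro x
      rw [hvdef]
      simp only
      rw [norm_add_sq_real, real_inner_smul_right, norm_smul, Real.norm_eq_abs, mul_pow, sq_abs,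
        real_inner_comm (gradient ξ x) (u x)]
    calc ∫ x, ‖v x‖ ^ 2 ∂μ
        = ∫ x, (‖gradient ξ x‖ ^ 2 + 2 * (ξ x * (inner ℝ (u x) (gradient ξ x) : ℝ))
            + (ξ x) ^ 2 * ‖u x‖ ^ 2) ∂μ :=
          integral_congr_ae (Filter.Eventually.of_forall hpt)
      _ = (∫ x, (‖gradient ξ x‖ ^ 2 + 2 * (ξ x * (inner ℝ (u x) (gradient ξ x) : ℝ))) ∂μ)
            + ∫ x, (ξ x) ^ 2 * ‖u x‖ ^ 2 ∂μ := integral_add (Igξ2.add Icross) Iξu2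
      _ = (∫ x, ‖gradient ξ x‖ ^ 2 ∂μ) + (∫ x, 2 * (ξ x * (inner ℝ (u x) (gradient ξ x) : ℝ)) ∂μ)
            + ∫ x, (ξ x) ^ 2 * ‖u x‖ ^ 2 ∂μ := by rw [integral_add Igξ2 Icross]
      _ = (∫ x, ‖gradient ξ x‖ ^ 2 ∂μ) + ∫ x, (ξ x) ^ 2 * ‖u x‖ ^ 2 ∂μ := by
          rw [integral_const_mul, hcross]
          ring
  -- step 4 : bound ∫ ξ²‖u‖² ≤ K² ∫ ‖u‖²
  have hbd : ∫ x, (ξ x) ^ 2 * ‖u x‖ ^ 2 ∂μ ≤ K ^ 2 * ∫ x, ‖u x‖ ^ 2 ∂μ := by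
    rw [← integral_const_mul]
    refine integral_mono_ae Iξu2 (Iu2.const_mul _) ?_
    filter_upwards [hξbd] with x hx
    have h1 : (ξ x) ^ 2 ≤ K ^ 2 := by
      rw [← sq_abs]
      exact pow_le_pow_left₀ (abs_nonneg _) hx 2
    exact mul_le_mul_of_nonneg_right h1 (by positivity)
  have hBle : ∫ x, ‖v x‖ ^ 2 ∂μ
      ≤ (∫ x, ‖gradient ξ x‖ ^ 2 ∂μ) + K ^ 2 * ∫ x, ‖u x‖ ^ 2 ∂μ := by
    rw [hB]; linarith
  -- conclusion
  have hAnn : (0:ℝ) ≤ ∫ x, ‖gradient T x‖ ^ 2 ∂μ := integral_nonneg fun x => by positivity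
  rw [ge_iff_le, div_le_iff₀ hpos]
  calc (∫ x in Ω, f x * ξ x) ^ 2
      = (∫ x, (inner ℝ (gradient T x) (v x) : ℝ) ∂μ) ^ 2 := by rw [hS]
    _ ≤ (∫ x, ‖gradient T x‖ ^ 2 ∂μ) * ∫ x, ‖v x‖ ^ 2 ∂μ := cauchy_schwarz_integral hgT hv
    _ ≤ (∫ x, ‖gradient T x‖ ^ 2 ∂μ)
          * ((∫ x, ‖gradient ξ x‖ ^ 2 ∂μ) + K ^ 2 * ∫ x, ‖u x‖ ^ 2 ∂μ) :=
        mul_le_mul_of_nonneg_left hBle hAnn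
end

section
/- Let ℓ > 0 be such that 1/ℓ is a positive integer, and define f(x,y) = (1/2)cos(2y/ℓ) − (1/2)cos(2x/ℓ), u_c(x,y) = (sin(x/ℓ)cos(y/ℓ), −cos(x/ℓ)sin(y/ℓ)) and η(x,y) = −ℓ cos(x/ℓ)cos(y/ℓ) on ℝ². Then: (i) u_c is divergence-free everywhere, i.e. ∂_x(u_c)₁ + ∂_y(u_c)₂ = 0; (ii) u_c solves the pure advection equation u_c·∇η = f at every point of ℝ²; (iii) on the boundary of the square (0,2π)², the normal component of u_c vanishes: (u_c)₁(x,y) = 0 whenever x ∈ {0,2π} and (u_c)₂(x,y) = 0 whenever y ∈ {0,2π}. -/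
open Real

lemma hasDerivAt_sin_div (ℓ x : ℝ) :
    HasDerivAt (fun t => Real.sin (t / ℓ)) (Real.cos (x / ℓ) * (1 / ℓ)) x := by
  simpa [Function.comp_def] using (Real.hasDerivAt_sin (x / ℓ)).comp x ((hasDerivAt_id x).div_const ℓ)

lemma hasDerivAt_cos_div (ℓ x : ℝ) :
    HasDerivAt (fun t => Real.cos (t / ℓ)) (-Real.sin (x / ℓ) * (1 / ℓ)) x := by
  simpa [Function.comp_def] using (Real.hasDerivAt_cos (x / ℓ)).comp x ((hasDerivAt_id x).div_const ℓ)

/-- the cellular flow `u_c = (sin(x/ℓ)cos(y/ℓ), −cos(x/ℓ)sin(y/ℓ))` is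
divergence-free, solves the pure advection equation `u_c·∇η = f` with
`η = −ℓcos(x/ℓ)cos(y/ℓ)` and `f = ½cos(2y/ℓ) − ½cos(2x/ℓ)`, and satisfies the
no-penetration condition on the boundary of `(0,2π)²`. -/
theorem cellular_flow_properties (ℓ : ℝ) (hℓ : 0 < ℓ)
    (n : ℕ) (hn : 0 < n) (hℓn : 1 / ℓ = (n : ℝ)) :
    (∀ x y : ℝ,
      deriv (fun x' => Real.sin (x' / ℓ) * Real.cos (y / ℓ)) x
        + deriv (fun y' => -(Real.cos (x / ℓ) * Real.sin (y' / ℓ))) y = 0)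
    ∧ (∀ x y : ℝ,
      Real.sin (x / ℓ) * Real.cos (y / ℓ)
          * deriv (fun x' => -(ℓ * Real.cos (x' / ℓ) * Real.cos (y / ℓ))) x
        + (-(Real.cos (x / ℓ) * Real.sin (y / ℓ)))
          * deriv (fun y' => -(ℓ * Real.cos (x / ℓ) * Real.cos (y' / ℓ))) y
      = (1 / 2) * Real.cos (2 * y / ℓ) - (1 / 2) * Real.cos (2 * x / ℓ))
    ∧ (∀ x y : ℝ, (x = 0 ∨ x = 2 * π) →
        Real.sin (x / ℓ) * Real.cos (y / ℓ) = 0)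
    ∧ (∀ x y : ℝ, (y = 0 ∨ y = 2 * π) →
        -(Real.cos (x / ℓ) * Real.sin (y / ℓ)) = 0) := by
  have hℓ0 : ℓ ≠ 0 := ne_of_gt hℓ
  have key : ∀ t : ℝ, t = 2 * π → Real.sin (t / ℓ) = 0 := by
    intro t ht
    have : t / ℓ = ((2 * n : ℤ) : ℝ) * π := by
      rw [ht, div_eq_mul_one_div, hℓn]; push_cast; ring
    rw [this, Real.sin_int_mul_pi]
  refine ⟨?_, ?_, ?_, ?_⟩
  · intro x y
    have h1 : deriv (fun x' => Real.sin (x' / ℓ) * Real.cos (y / ℓ)) x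
        = Real.cos (x / ℓ) * (1 / ℓ) * Real.cos (y / ℓ) :=
      ((hasDerivAt_sin_div ℓ x).mul_const _).deriv
    have h2 : deriv (fun y' => -(Real.cos (x / ℓ) * Real.sin (y' / ℓ))) y
        = -(Real.cos (x / ℓ) * (Real.cos (y / ℓ) * (1 / ℓ))) :=
      (((hasDerivAt_sin_div ℓ y).const_mul (Real.cos (x / ℓ))).neg).deriv
    rw [h1, h2]; ring
  · intro x y
    have h1 : deriv (fun x' => -(ℓ * Real.cos (x' / ℓ) * Real.cos (y / ℓ))) x
        = Real.sin (x / ℓ) * Real.cos (y / ℓ) := by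
      have e : (fun x' => -(ℓ * Real.cos (x' / ℓ) * Real.cos (y / ℓ)))
          = fun x' => (-(ℓ * Real.cos (y / ℓ))) * Real.cos (x' / ℓ) := by
        funext x'; ring
      rw [e, ((hasDerivAt_cos_div ℓ x).const_mul _).deriv]
      field_simp
    have h2 : deriv (fun y' => -(ℓ * Real.cos (x / ℓ) * Real.cos (y' / ℓ))) y
        = Real.cos (x / ℓ) * Real.sin (y / ℓ) := by
      have e : (fun y' => -(ℓ * Real.cos (x / ℓ) * Real.cos (y' / ℓ)))
          = fun y' => (-(ℓ * Real.cos (x / ℓ))) * Real.cos (y' / ℓ) := by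
        funext y'; ring
      rw [e, ((hasDerivAt_cos_div ℓ y).const_mul _).deriv]
      field_simp
    rw [h1, h2]
    have hx : Real.cos (2 * x / ℓ) = 2 * Real.cos (x / ℓ) ^ 2 - 1 := by
      rw [show 2 * x / ℓ = 2 * (x / ℓ) by ring, Real.cos_two_mul]
    have hy : Real.cos (2 * y / ℓ) = 2 * Real.cos (y / ℓ) ^ 2 - 1 := by
      rw [show 2 * y / ℓ = 2 * (y / ℓ) by ring, Real.cos_two_mul]
    have hpx := Real.sin_sq_add_cos_sq (x / ℓ)
    have hpy := Real.sin_sq_add_cos_sq (y / ℓ)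
    rw [hx, hy]
    nlinarith [hpx, hpy]
  · intro x y hx
    rcases hx with h | h
    · simp [h]
    · rw [key x h, zero_mul]
  · intro x y hy
    rcases hy with h | h
    · simp [h]
    · rw [key y h, mul_zero, neg_zero]
end

section
/- Let ε > 0, let R_ε = (−√3·ε, √3·ε) × (1/2 − ε, 1/2 + ε) ⊂ ℝ², and let ψ₂(y) = −π/6 − arctan((2y − 1 − 4ε)/(2√3·ε)) be the stream function of the pinching flow inside R_ε, so that the velocity there is u(x,y) = (ψ₂′(y), 0) with ψ₂′(y) = −4√3·ε / (12ε² + (2y − 1 − 4ε)²). Then the kinetic energy of the pinching flow inside the rectangle is independent of ε and equals ∫_{R_ε} |u|² dx dy = ∫_{R_ε} (ψ₂′(y))² dx dy = π/6. -/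
open Real MeasureTheory

lemma aux_frac (a u : ℝ) (ha : a ≠ 0) :
    1 / (1 + (u / a) ^ 2) * (2 * 1 / a) * (1 / a) = 2 / (a ^ 2 + u ^ 2) := by
  have h : a ^ 2 + u ^ 2 ≠ 0 := by positivity
  field_simp

/-- the kinetic energy of the pinching flow inside the rectangle
`R_ε = (−√3ε, √3ε) × (1/2−ε, 1/2+ε)` is independent of `ε` and equals `π/6`. The flow
is horizontal with stream function `ψ₂(y) = −π/6 − arctan((2y−1−4ε)/(2√3ε))`, whose
derivative is `ψ₂′(y) = −4√3ε/(12ε² + (2y−1−4ε)²)`. -/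
theorem pinching_flow_energy (ε : ℝ) (hε : 0 < ε) :
    (∀ y : ℝ,
      deriv (fun y' => -(π / 6)
          - Real.arctan ((2 * y' - 1 - 4 * ε) / (2 * Real.sqrt 3 * ε))) y
        = -(4 * Real.sqrt 3 * ε) / (12 * ε ^ 2 + (2 * y - 1 - 4 * ε) ^ 2))
    ∧ (∫ x in Set.Ioo (-(Real.sqrt 3 * ε)) (Real.sqrt 3 * ε),
        ∫ y in Set.Ioo (1 / 2 - ε) (1 / 2 + ε),
          (-(4 * Real.sqrt 3 * ε) / (12 * ε ^ 2 + (2 * y - 1 - 4 * ε) ^ 2)) ^ 2)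
      = π / 6 := by
  have hs : (0:ℝ) < Real.sqrt 3 := Real.sqrt_pos.mpr (by norm_num)
  have hs2 : Real.sqrt 3 ^ 2 = 3 := Real.sq_sqrt (by norm_num)
  have ha : (2 * Real.sqrt 3 * ε) ≠ 0 := by positivity
  have hsq : (2 * Real.sqrt 3 * ε) ^ 2 = 12 * ε ^ 2 := by
    rw [mul_pow, mul_pow, hs2]; ring
  constructor
  · -- derivative
    intro y
    have hg : HasDerivAt (fun y' => (2 * y' - 1 - 4 * ε) / (2 * Real.sqrt 3 * ε))
        (2 * 1 / (2 * Real.sqrt 3 * ε)) y :=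
      (((hasDerivAt_id y).const_mul 2).sub_const 1 |>.sub_const (4*ε)).div_const _
    have h := ((Real.hasDerivAt_arctan
        ((2 * y - 1 - 4 * ε) / (2 * Real.sqrt 3 * ε))).comp y hg).const_sub (-(π/6))
    have hd := h.deriv
    simp only [Function.comp] at hd
    rw [hd]
    have hD : 12 * ε ^ 2 + (2 * y - 1 - 4 * ε) ^ 2 ≠ 0 := by positivity
    field_simp
    linear_combination (16 * ε ^ 2) * hs2
  · -- energy
    set f : ℝ → ℝ := fun y =>
      (-(4 * Real.sqrt 3 * ε) / (12 * ε ^ 2 + (2 * y - 1 - 4 * ε) ^ 2)) ^ 2 with hf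
    set F : ℝ → ℝ := fun y =>
      (2 * y - 1 - 4 * ε) / (12 * ε ^ 2 + (2 * y - 1 - 4 * ε) ^ 2)
        + (1 / (2 * Real.sqrt 3 * ε))
          * Real.arctan ((2 * y - 1 - 4 * ε) / (2 * Real.sqrt 3 * ε)) with hF
    have hDpos : ∀ y : ℝ, 0 < 12 * ε ^ 2 + (2 * y - 1 - 4 * ε) ^ 2 := fun y => by positivity
    have hderiv : ∀ y : ℝ, HasDerivAt F (f y) y := by
      intro y
      have hN : HasDerivAt (fun y' => 2 * y' - 1 - 4 * ε) (2 * 1) y :=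
        ((hasDerivAt_id y).const_mul 2).sub_const 1 |>.sub_const (4*ε)
      have hDen : HasDerivAt (fun y' => 12 * ε ^ 2 + (2 * y' - 1 - 4 * ε) ^ 2)
          (2 * (2 * y - 1 - 4 * ε) ^ 1 * (2 * 1)) y := by
        have := (hN.pow 2).const_add (12 * ε ^ 2)
        simpa using this
      have h1 := hN.div hDen (hDpos y).ne'
      have hg : HasDerivAt (fun y' => (2 * y' - 1 - 4 * ε) / (2 * Real.sqrt 3 * ε))
          (2 * 1 / (2 * Real.sqrt 3 * ε)) y := hN.div_const _
      have h2 := ((Real.hasDerivAt_arctan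
          ((2 * y - 1 - 4 * ε) / (2 * Real.sqrt 3 * ε))).comp y hg).const_mul
          (1 / (2 * Real.sqrt 3 * ε))
      have hsum := h1.add h2
      have e2 : 1 / (2 * Real.sqrt 3 * ε) *
          (1 / (1 + ((2 * y - 1 - 4 * ε) / (2 * Real.sqrt 3 * ε)) ^ 2)
            * (2 * 1 / (2 * Real.sqrt 3 * ε)))
          = 2 / (12 * ε ^ 2 + (2 * y - 1 - 4 * ε) ^ 2) := by
        have := aux_frac (2 * Real.sqrt 3 * ε) (2 * y - 1 - 4 * ε) ha
        rw [hsq] at this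
        linarith [this]
      rw [e2] at hsum
      have hval : (2 * 1 * (12 * ε ^ 2 + (2 * y - 1 - 4 * ε) ^ 2)
            - (2 * y - 1 - 4 * ε) * (2 * (2 * y - 1 - 4 * ε) ^ 1 * (2 * 1)))
            / (12 * ε ^ 2 + (2 * y - 1 - 4 * ε) ^ 2) ^ 2
          + 2 / (12 * ε ^ 2 + (2 * y - 1 - 4 * ε) ^ 2) = f y := by
        simp only [hf]
        have e1 : (-(4 * Real.sqrt 3 * ε)) ^ 2 = 48 * ε ^ 2 := by
          rw [neg_pow, mul_pow, mul_pow, hs2]; ring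
        have hD := (hDpos y).ne'
        rw [div_pow, e1]
        field_simp
        ring
      rw [hval] at hsum
      refine hsum.congr_of_eventuallyEq (Filter.Eventually.of_forall fun z => ?_)
      simp only [hF, Pi.add_apply, Pi.div_apply, Function.comp_apply]
    have hle : (1:ℝ) / 2 - ε ≤ 1 / 2 + ε := by linarith
    have hcont : Continuous f := by
      apply Continuous.pow
      exact continuous_const.div (by fun_prop) (fun y => (hDpos y).ne')
    have hinner : (∫ y in Set.Ioo (1 / 2 - ε) (1 / 2 + ε), f y)
        = π / (12 * Real.sqrt 3 * ε) := by
      rw [← integral_Ioc_eq_integral_Ioo, ← intervalIntegral.integral_of_le hle]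
      rw [intervalIntegral.integral_eq_sub_of_hasDerivAt (fun y _ => hderiv y)
        (hcont.intervalIntegrable _ _)]
      have e1 : 2 * (1 / 2 + ε) - 1 - 4 * ε = -(2 * ε) := by ring
      have e2 : 2 * (1 / 2 - ε) - 1 - 4 * ε = -(6 * ε) := by ring
      rw [hF]
      simp only [e1, e2]
      have harg1 : -(2 * ε) / (2 * Real.sqrt 3 * ε) = -(1 / Real.sqrt 3) := by
        rw [div_eq_iff ha]
        field_simp
      have harg2 : -(6 * ε) / (2 * Real.sqrt 3 * ε) = -(Real.sqrt 3) := by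
        rw [div_eq_iff ha]
        linear_combination 2 * ε * hs2
      have hat1 : Real.arctan (1 / Real.sqrt 3) = π / 6 :=
        Real.arctan_eq_of_tan_eq Real.tan_pi_div_six
          ⟨by linarith [Real.pi_pos], by linarith [Real.pi_pos]⟩
      have hat2 : Real.arctan (Real.sqrt 3) = π / 3 :=
        Real.arctan_eq_of_tan_eq Real.tan_pi_div_three
          ⟨by linarith [Real.pi_pos], by linarith [Real.pi_pos]⟩
      rw [harg1, harg2, Real.arctan_neg, Real.arctan_neg, hat1, hat2]
      have h16 : 12 * ε ^ 2 + (-(2 * ε)) ^ 2 = 16 * ε ^ 2 := by ring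
      have h48 : 12 * ε ^ 2 + (-(6 * ε)) ^ 2 = 48 * ε ^ 2 := by ring
      rw [h16, h48]
      field_simp
      ring
    rw [hinner, setIntegral_const]
    rw [Real.volume_real_Ioo_of_le (by nlinarith [mul_pos hs hε])]
    have : Real.sqrt 3 * ε - -(Real.sqrt 3 * ε) = 2 * Real.sqrt 3 * ε := by ring
    rw [this, smul_eq_mul]
    field_simp
    ring
end
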